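/- Let N ≥ 2, m ≥ 1, τ = exp(2πi/m), ζ = exp(2πi/(mN)), and qₖ = ζᵏ for k = 1,…,N. Then for every i ∈ {1,…,N}: Σ_{j≠i} Σ_{s=0}^{m−1} τˢ qᵢqⱼ(qᵢ + τˢqⱼ)/(qᵢ − τˢqⱼ)³ = 0. -/

import Mathlib

open Finset Complex

noncomputable def gfun (x : ℂ) : ℂ := x * (1 + x) / (1 - x) ^ 3

lemma gfun_one : gfun 1 = 0 := by simp [gfun]

lemma gfun_inv {x : ℂ} (hx : x ≠ 0) : gfun x⁻¹ = - gfun x := by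
  by_cases h1 : x = 1
  · simp [h1, gfun]
  · have h1' : (1 : ℂ) - x ≠ 0 := sub_ne_zero.mpr (Ne.symm h1)
    have h2 : (1 : ℂ) - x⁻¹ ≠ 0 := by
      rw [sub_ne_zero]
      intro h
      exact h1 (by field_simp at h; simp [h])
    unfold gfun
    rw [div_eq_iff (pow_ne_zero _ h2)]
    have hx3 : x ^ 3 ≠ 0 := pow_ne_zero _ hx
    field_simp
    ring

lemma sum_gfun_roots (M : ℕ) (hM : 0 < M) :
    ∑ x ∈ Polynomial.nthRootsFinset M (1 : ℂ), gfun x = 0 := by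
  refine Finset.sum_involution (fun x _ => x⁻¹) ?_ ?_ ?_ ?_
  · intro a ha
    have ha1 : a ^ M = 1 := (Polynomial.mem_nthRootsFinset hM (1 : ℂ)).mp ha
    have ha0 : a ≠ 0 := by
      intro h; rw [h, zero_pow hM.ne'] at ha1; exact zero_ne_one ha1
    rw [gfun_inv ha0]; ring
  · intro a ha hfa
    intro h
    have ha1 : a ^ M = 1 := (Polynomial.mem_nthRootsFinset hM (1 : ℂ)).mp ha
    have ha0 : a ≠ 0 := by
      intro h'; rw [h', zero_pow hM.ne'] at ha1; exact zero_ne_one ha1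
    have : a * a = 1 := by
      nth_rewrite 2 [← h]
      exact mul_inv_cancel₀ ha0
    rcases mul_self_eq_one_iff.mp this with h | h
    · exact hfa (by rw [h, gfun_one])
    · exact hfa (by simp [h, gfun])
  · intro a ha
    have ha1 : a ^ M = 1 := (Polynomial.mem_nthRootsFinset hM (1 : ℂ)).mp ha
    exact (Polynomial.mem_nthRootsFinset hM (1 : ℂ)).mpr (by rw [inv_pow, ha1, inv_one])
  · intro a ha; exact inv_inv a

lemma term_eq (a b : ℂ) (ha : a ≠ 0) : a * b * (a + b) / (a - b) ^ 3 = gfun (b / a) := by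
  by_cases hab : a = b
  · rw [← hab, sub_self, div_self ha, gfun_one]
    simp
  · have h1 : a - b ≠ 0 := sub_ne_zero.mpr hab
    have h2 : (1 : ℂ) - b / a ≠ 0 := by
      rw [sub_ne_zero]
      intro h
      field_simp at h
      exact hab h
    unfold gfun
    rw [div_eq_div_iff (pow_ne_zero _ h1) (pow_ne_zero _ h2)]
    field_simp

lemma nat_decomp {N s j : ℕ} (hN : 0 < N) (hj1 : 1 ≤ j) (hjN : j ≤ N) :
    (s * N + (j - 1)) % N = j - 1 ∧ (s * N + (j - 1)) / N = s := by
  constructor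
  · rw [Nat.add_comm, Nat.add_mul_mod_self_right, Nat.mod_eq_of_lt (by omega)]
  · rw [Nat.add_comm, Nat.add_mul_div_right _ _ hN, Nat.div_eq_of_lt (by omega), Nat.zero_add]

/-- Equilibrium condition for the frozen `G(m,1,N)` spin chain: with `τ = exp(2πi/m)`,
`ζ = exp(2πi/(mN))` and equally spaced positions `q_k = ζ^k`, for every `i ∈ {1,…,N}` one has
`Σ_{j≠i} Σ_{s=0}^{m-1} τ^s q_i q_j (q_i + τ^s q_j)/(q_i − τ^s q_j)³ = 0`. -/
theorem stmt10 (N m : ℕ) (hN : 2 ≤ N) (hm : 1 ≤ m) :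
    let τ : ℂ := Complex.exp (2 * Real.pi * Complex.I / m)
    let ζ : ℂ := Complex.exp (2 * Real.pi * Complex.I / (m * N))
    let q : ℕ → ℂ := fun k => ζ ^ k
    ∀ i ∈ Finset.Icc 1 N,
      ∑ j ∈ (Finset.Icc 1 N).erase i, ∑ s ∈ Finset.range m,
        τ ^ s * q i * q j * (q i + τ ^ s * q j) / (q i - τ ^ s * q j) ^ 3 = 0 := by
  intro τ ζ q i hi
  have hN0 : 0 < N := by omega
  have hm0 : 0 < m := hm
  have hM0 : 0 < m * N := Nat.mul_pos hm0 hN0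
  obtain ⟨hi1, hiN⟩ := Finset.mem_Icc.mp hi
  have hζ : IsPrimitiveRoot ζ (m * N) := by
    have h := Complex.isPrimitiveRoot_exp (m * N) hM0.ne'
    have : ζ = Complex.exp (2 * Real.pi * Complex.I / (↑(m * N))) := by
      show Complex.exp _ = _
      push_cast
      rfl
    rwa [this]
  have hζ0 : ζ ≠ 0 := Complex.exp_ne_zero _
  have hζM : ζ ^ (m * N) = 1 := hζ.pow_eq_one
  have hτ : τ = ζ ^ N := by
    show Complex.exp _ = Complex.exp _ ^ N
    rw [← Complex.exp_nat_mul]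
    congr 1
    have hmne : (m : ℂ) ≠ 0 := Nat.cast_ne_zero.mpr hm0.ne'
    have hNne : (N : ℂ) ≠ 0 := Nat.cast_ne_zero.mpr hN0.ne'
    field_simp
  have hroot : ∀ a : ℕ, (ζ ^ a) ^ (m * N) = 1 := by
    intro a
    rw [← pow_mul, Nat.mul_comm, pow_mul, hζM, one_pow]
  have hη : IsPrimitiveRoot (ζ ^ m) N := hζ.pow hM0 rfl
  have hη0 : (ζ : ℂ) ^ m ≠ 0 := pow_ne_zero _ hζ0
  -- the exponent inequality
  have hexp_le : ∀ s j : ℕ, s < m → j ≤ N → s * N + j ≤ m * N := by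
    intro s j hs hj
    calc s * N + j ≤ s * N + N := by omega
    _ = (s + 1) * N := by ring
    _ ≤ m * N := Nat.mul_le_mul_right N hs
  -- cancel one power of ζ
  have hcancel : ∀ e e' : ℕ, 1 ≤ e → e ≤ m * N → 1 ≤ e' → e' ≤ m * N →
      ζ ^ e = ζ ^ e' → e = e' := by
    intro e e' h1 h2 h1' h2' h
    have he : e - 1 = e' - 1 := by
      apply hζ.pow_inj (by omega) (by omega)
      have := h
      rw [show e = (e - 1) + 1 by omega, show e' = (e' - 1) + 1 by omega, pow_succ, pow_succ]
        at this
      exact mul_right_cancel₀ hζ0 this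
    omega
  -- step 1: rewrite each term as gfun
  have hterm : ∀ j ∈ (Finset.Icc 1 N).erase i, ∀ s ∈ Finset.range m,
      τ ^ s * q i * q j * (q i + τ ^ s * q j) / (q i - τ ^ s * q j) ^ 3
        = gfun (ζ ^ (s * N + j) / ζ ^ i) := by
    intro j hj s hs
    have hb : τ ^ s * q j = ζ ^ (s * N + j) := by
      show τ ^ s * ζ ^ j = _
      rw [Nat.mul_comm s N, hτ, ← pow_mul, ← pow_add]
    have hqi : q i = ζ ^ i := rfl
    have hqj : q j = ζ ^ j := rfl
    calc τ ^ s * q i * q j * (q i + τ ^ s * q j) / (q i - τ ^ s * q j) ^ 3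
        = ζ ^ i * (τ ^ s * q j) * (ζ ^ i + τ ^ s * q j) / (ζ ^ i - τ ^ s * q j) ^ 3 := by
          rw [hqi, hqj]; ring
      _ = ζ ^ i * ζ ^ (s * N + j) * (ζ ^ i + ζ ^ (s * N + j)) / (ζ ^ i - ζ ^ (s * N + j)) ^ 3 := by
          rw [hb]
      _ = gfun (ζ ^ (s * N + j) / ζ ^ i) := term_eq _ _ (pow_ne_zero _ hζ0)
  rw [Finset.sum_congr rfl (fun j hj => Finset.sum_congr rfl (fun s hs => hterm j hj s hs))]
  rw [← Finset.sum_product']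
  have key : ∑ p ∈ (Finset.Icc 1 N).erase i ×ˢ Finset.range m,
        gfun (ζ ^ (p.2 * N + p.1) / ζ ^ i)
      = ∑ x ∈ (Polynomial.nthRootsFinset (m * N) (1 : ℂ) \ Polynomial.nthRootsFinset m (1 : ℂ)), gfun x := by
    apply Finset.sum_bij (fun p _ => ζ ^ (p.2 * N + p.1) / ζ ^ i)
    · -- maps into T
      rintro ⟨j, s⟩ hp
      simp only [Finset.mem_product, Finset.mem_erase, Finset.mem_Icc, Finset.mem_range] at hp
      obtain ⟨⟨hji, hj1, hjN⟩, hsm⟩ := hp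
      rw [Finset.mem_sdiff]
      constructor
      · rw [Polynomial.mem_nthRootsFinset hM0, div_pow, hroot, hroot, one_div, inv_one]
      · rw [Polynomial.mem_nthRootsFinset hm0]
        intro hcon
        rw [div_pow, div_eq_one_iff_eq (pow_ne_zero _ (pow_ne_zero _ hζ0))] at hcon
        rw [← pow_mul, ← pow_mul, Nat.mul_comm (s * N + j) m, Nat.mul_comm i m,
          pow_mul, pow_mul] at hcon
        -- hcon : (ζ^m)^(s*N+j) = (ζ^m)^i
        have h2 : (ζ ^ m) ^ (s * N + j) = (ζ ^ m) ^ j := by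
          rw [pow_add, ← pow_mul, show m * (s * N) = s * (m * N) from by ring, pow_mul, hroot,
            one_mul]
        rw [h2] at hcon
        have : j = i := by
          have hj' : j - 1 = i - 1 := by
            apply hη.pow_inj (by omega) (by omega)
            have := hcon
            rw [show j = (j - 1) + 1 by omega, show i = (i - 1) + 1 by omega,
              pow_succ, pow_succ] at this
            exact mul_right_cancel₀ hη0 this
          omega
        exact hji this
    · -- injective
      rintro ⟨j, s⟩ hp ⟨j', s'⟩ hp' h
      simp only [Finset.mem_product, Finset.mem_erase, Finset.mem_Icc, Finset.mem_range] at hp hp'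
      obtain ⟨⟨hji, hj1, hjN⟩, hsm⟩ := hp
      obtain ⟨⟨hji', hj1', hjN'⟩, hsm'⟩ := hp'
      simp only at h
      have h' : ζ ^ (s * N + j) = ζ ^ (s' * N + j') := by
        have := congrArg (· * ζ ^ i) h
        simpa [div_mul_cancel₀ _ (pow_ne_zero i hζ0)] using this
      have he : s * N + j = s' * N + j' :=
        hcancel _ _ (by omega) (hexp_le s j hsm hjN) (by omega) (hexp_le s' j' hsm' hjN') h'
      have he' : s * N + (j - 1) = s' * N + (j' - 1) := by omega
      have d1 := nat_decomp (s := s) hN0 hj1 hjN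
      have d2 := nat_decomp (s := s') hN0 hj1' hjN'
      have hs : s = s' := by rw [← d1.2, ← d2.2, he']
      have hj : j - 1 = j' - 1 := by rw [← d1.1, ← d2.1, he']
      have : j = j' := by omega
      simp [this, hs]
    · -- surjective
      intro x hx
      rw [Finset.mem_sdiff, Polynomial.mem_nthRootsFinset hM0,
        Polynomial.mem_nthRootsFinset hm0] at hx
      obtain ⟨hx1, hx2⟩ := hx
      have : NeZero (m * N) := ⟨hM0.ne'⟩
      obtain ⟨k, hk, hkx⟩ := hζ.eq_pow_of_pow_eq_one hx1
      set u := (k + i - 1) % (m * N) with hu_def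
      have hu : u < m * N := Nat.mod_lt _ hM0
      set s := u / N with hs_def
      set j := u % N + 1 with hj_def
      have hjN : j ≤ N := by
        have := Nat.mod_lt u hN0
        omega
      have hsm : s < m := by
        rw [hs_def]
        rw [Nat.div_lt_iff_lt_mul hN0]
        exact hu
      have hdecomp : s * N + (j - 1) = u := by
        have := Nat.div_add_mod u N
        rw [hs_def, hj_def, Nat.add_sub_cancel, Nat.mul_comm]
        exact this
      have hsj : s * N + j = u + 1 := by omega
      -- ζ^(s*N+j) = ζ^(k+i)
      have hzeq : ζ ^ (s * N + j) = ζ ^ (k + i) := by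
        have hmod := Nat.div_add_mod (k + i - 1) (m * N)
        rw [← hu_def] at hmod
        generalize hQ : (k + i - 1) / (m * N) = Q at hmod
        have hk' : k + i = (m * N) * Q + (u + 1) := by omega
        rw [hsj, hk']
        conv_rhs => rw [pow_add]
        rw [pow_mul, hζM, one_pow, one_mul]
      have hji : j ≠ i := by
        intro hcon
        have h1 : ζ ^ (s * N) = ζ ^ k := by
          rw [hcon] at hzeq
          rw [pow_add, pow_add] at hzeq
          exact mul_right_cancel₀ (pow_ne_zero _ hζ0) hzeq
        have hsN_lt : s * N < m * N := by
          calc s * N < s * N + N := by omega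
          _ = (s + 1) * N := by ring
          _ ≤ m * N := Nat.mul_le_mul_right N hsm
        have hk_eq : s * N = k := hζ.pow_inj hsN_lt hk h1
        apply hx2
        rw [← hkx, ← hk_eq, ← pow_mul, show s * N * m = s * (m * N) from by ring, pow_mul]
        exact hroot s
      refine ⟨⟨j, s⟩, ?_, ?_⟩
      · simp only [Finset.mem_product, Finset.mem_erase, Finset.mem_Icc, Finset.mem_range]
        exact ⟨⟨hji, by omega, hjN⟩, hsm⟩
      · simp only
        rw [hzeq, pow_add, mul_div_assoc, div_self (pow_ne_zero _ hζ0), mul_one, hkx]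
    · intro p hp
      rfl
  rw [key, Finset.sum_sdiff_eq_sub, sum_gfun_roots _ hM0, sum_gfun_roots _ hm0, sub_zero]
  intro x hx
  rw [Polynomial.mem_nthRootsFinset hm0] at hx
  rw [Polynomial.mem_nthRootsFinset hM0, pow_mul, hx, one_pow]
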